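/- Let λ > 0 and let r_eff : [T, ∞) → (0,∞) be an increasing solution with r_eff(t) → ∞ of r_eff'(t) = √(C₀ + 4λα₀ ln r_eff(t)) for constants C₀ ∈ ℝ, α₀ > 0 (valid for t large enough that the radicand is positive). Then r_eff(t)/(2t√(λα₀ ln t)) → 1 as t → ∞. -/

import Mathlib

open Filter

lemma deriv_le_slope {f d : ℝ → ℝ} {a b M : ℝ} (hab : a ≤ b)
    (hf : ∀ s ∈ Set.Icc a b, HasDerivAt f (d s) s)
    (hM : ∀ s ∈ Set.Icc a b, d s ≤ M) :
    f b - f a ≤ M * (b - a) := by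
  set g : ℝ → ℝ := fun s => M * s - f s with hg
  have hmono : MonotoneOn g (Set.Icc a b) := by
    apply monotoneOn_of_deriv_nonneg (convex_Icc a b)
    · exact (continuous_const.mul continuous_id).continuousOn.sub
        (fun x hx => ((hf x hx).continuousAt).continuousWithinAt)
    · intro x hx
      rw [interior_Icc] at hx
      have := ((hasDerivAt_id x).const_mul M).sub (hf x (Set.mem_Icc_of_Ioo hx))
      exact this.differentiableAt.differentiableWithinAt
    · intro x hx
      rw [interior_Icc] at hx
      have h : HasDerivAt g (M * 1 - d x) x :=
        ((hasDerivAt_id x).const_mul M).sub (hf x (Set.mem_Icc_of_Ioo hx))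
      rw [h.deriv]
      have := hM x (Set.mem_Icc_of_Ioo hx)
      simp only [mul_one]
      linarith
  have := hmono (Set.left_mem_Icc.2 hab) (Set.right_mem_Icc.2 hab) hab
  simp only [hg] at this
  linarith

lemma slope_le_deriv {f d : ℝ → ℝ} {a b m : ℝ} (hab : a ≤ b)
    (hf : ∀ s ∈ Set.Icc a b, HasDerivAt f (d s) s)
    (hm : ∀ s ∈ Set.Icc a b, m ≤ d s) :
    m * (b - a) ≤ f b - f a := by
  have := deriv_le_slope (f := fun s => -f s) (d := fun s => -d s) (M := -m) hab
    (fun s hs => (hf s hs).neg) (fun s hs => by simpa using hm s hs)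
  linarith

lemma log_le_two_sqrt {x : ℝ} (hx : 0 < x) : Real.log x ≤ 2 * Real.sqrt x := by
  have h1 : Real.log (Real.sqrt x) ≤ Real.sqrt x - 1 :=
    Real.log_le_sub_one_of_pos (Real.sqrt_pos.2 hx)
  rw [Real.log_sqrt hx.le] at h1
  linarith [Real.sqrt_nonneg x]

lemma sqrt_four : Real.sqrt 4 = 2 := by
  rw [show (4:ℝ) = 2^2 by norm_num, Real.sqrt_sq (by norm_num)]

lemma sqrt_le_self' {x : ℝ} (hx : 1 ≤ x) : Real.sqrt x ≤ x := by
  nlinarith [Real.sq_sqrt (by linarith : (0:ℝ) ≤ x), Real.sqrt_nonneg x, Real.one_le_sqrt.2 hx]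

lemma self_le_sqrt' {x : ℝ} (h0 : 0 ≤ x) (h1 : x ≤ 1) : x ≤ Real.sqrt x := by
  nlinarith [Real.sq_sqrt h0, Real.sqrt_nonneg x, Real.sqrt_le_one.2 h1]

set_option maxHeartbeats 1600000 in
theorem effective_dispersion_asymptotics (lam α₀ C₀ T : ℝ) (hlam : 0 < lam) (hα₀ : 0 < α₀)
    (r : ℝ → ℝ)
    (hpos : ∀ t : ℝ, T ≤ t → 0 < r t)
    (hmono : StrictMonoOn r (Set.Ici T))
    (hinfty : Tendsto r atTop atTop)
    (hrad : ∀ t : ℝ, T ≤ t → 0 < C₀ + 4 * lam * α₀ * Real.log (r t))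
    (hode : ∀ t : ℝ, T ≤ t →
      HasDerivAt r (Real.sqrt (C₀ + 4 * lam * α₀ * Real.log (r t))) t) :
    Tendsto (fun t : ℝ => r t / (2 * t * Real.sqrt (lam * α₀ * Real.log t)))
      atTop (nhds 1) := by
  have hk : (0:ℝ) < 4 * lam * α₀ := by positivity
  set k := 4 * lam * α₀ with hkdef
  have hode' : ∀ s : ℝ, T ≤ s → HasDerivAt r (Real.sqrt (C₀ + k * Real.log (r s))) s := hode
  have hlog : Tendsto Real.log atTop atTop := Real.tendsto_log_atTop
  have hloginf : Tendsto (fun t => Real.log (r t)) atTop atTop := hlog.comp hinfty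
  have hradinf : Tendsto (fun t => C₀ + k * Real.log (r t)) atTop atTop :=
    tendsto_atTop_add_const_left _ C₀ (hloginf.const_mul_atTop hk)
  -- Step C : r t ≥ t eventually
  obtain ⟨A₁, hA₁⟩ := eventually_atTop.mp (hradinf.eventually_ge_atTop 4)
  set S₁ := max A₁ (max T 1) with hS₁def
  have hS₁T : T ≤ S₁ := (le_max_left T 1).trans (le_max_right _ _)
  have hS₁1 : (1:ℝ) ≤ S₁ := (le_max_right T 1).trans (le_max_right _ _)
  have hd2 : ∀ s, S₁ ≤ s → 2 ≤ Real.sqrt (C₀ + k * Real.log (r s)) := by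
    intro s hs
    rw [show (2:ℝ) = Real.sqrt 4 from sqrt_four.symm]
    exact Real.sqrt_le_sqrt (hA₁ s ((le_max_left _ _).trans hs))
  have hC : ∀ t, 2*S₁ ≤ t → t ≤ r t := by
    intro t ht
    have hS₁t : S₁ ≤ t := by linarith only [ht, hS₁1]
    have hsl := slope_le_deriv (f := r)
      (d := fun s => Real.sqrt (C₀ + k * Real.log (r s))) (m := 2) hS₁t
      (fun s hs => hode' s (hS₁T.trans hs.1)) (fun s hs => hd2 s hs.1)
    have hrpos := hpos S₁ hS₁T
    linarith only [hsl, hrpos, ht, hS₁1]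
  have hlogC : ∀ s, 2*S₁ ≤ s → Real.log s ≤ Real.log (r s) := by
    intro s hs
    exact Real.log_le_log (by linarith only [hs, hS₁1]) (hC s hs)
  -- Step D : r t ≤ t^2 eventually
  set X₀ := max (2*|C₀|) (max (16*k^2) 1) with hX₀def
  have hX : ∀ x : ℝ, X₀ ≤ x → C₀ + k * Real.log x ≤ x := by
    intro x hx
    have hx1 : (1:ℝ) ≤ x := ((le_max_right _ _).trans (le_max_right _ _)).trans hx
    have hx0 : (0:ℝ) < x := by linarith only [hx1]
    have hxc : 2*|C₀| ≤ x := (le_max_left _ _).trans hx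
    have hxk : 16*k^2 ≤ x := ((le_max_left _ _).trans (le_max_right _ _)).trans hx
    have hsx : 4*k ≤ Real.sqrt x := by
      rw [Real.le_sqrt (by positivity) hx0.le]
      linarith only [hxk]
    have hlx : Real.log x ≤ 2 * Real.sqrt x := log_le_two_sqrt hx0
    have hxx : Real.sqrt x * Real.sqrt x = x := Real.mul_self_sqrt hx0.le
    have habs : C₀ ≤ |C₀| := le_abs_self C₀
    linarith only [mul_le_mul_of_nonneg_left hlx hk.le,
      mul_le_mul_of_nonneg_right hsx (Real.sqrt_nonneg x), hxx, habs, hxc]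
  obtain ⟨A₂, hA₂⟩ := eventually_atTop.mp (hinfty.eventually_ge_atTop X₀)
  set S₂ := max A₂ (2*S₁) with hS₂def
  have hS₂S₁ : 2*S₁ ≤ S₂ := le_max_right _ _
  have hS₂1 : (1:ℝ) ≤ S₂ := by linarith only [hS₂S₁, hS₁1]
  have hS₂T : T ≤ S₂ := by linarith only [hS₂S₁, hS₁1, hS₁T]
  have hrX : ∀ s, S₂ ≤ s → X₀ ≤ r s := fun s hs => hA₂ s ((le_max_left _ _).trans hs)
  have hdsq : ∀ s, S₂ ≤ s → Real.sqrt (C₀ + k * Real.log (r s)) ≤ Real.sqrt (r s) :=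
    fun s hs => Real.sqrt_le_sqrt (hX (r s) (hrX s hs))
  have hφ : ∀ s, S₂ ≤ s → HasDerivAt (fun x => 2 * Real.sqrt (r x))
      (2 * (Real.sqrt (C₀ + k * Real.log (r s)) / (2 * Real.sqrt (r s)))) s := by
    intro s hs
    exact ((hode' s (hS₂T.trans hs)).sqrt (ne_of_gt (hpos s (hS₂T.trans hs)))).const_mul 2
  have hφbound : ∀ s, S₂ ≤ s →
      2 * (Real.sqrt (C₀ + k * Real.log (r s)) / (2 * Real.sqrt (r s))) ≤ 1 := by
    intro s hs
    have hrs : 0 < Real.sqrt (r s) := Real.sqrt_pos.2 (hpos s (hS₂T.trans hs))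
    have heq : 2 * (Real.sqrt (C₀ + k * Real.log (r s)) / (2 * Real.sqrt (r s)))
        = Real.sqrt (C₀ + k * Real.log (r s)) / Real.sqrt (r s) := by
      field_simp
    rw [heq, div_le_one hrs]
    exact hdsq s hs
  have hsqgrow : ∀ t, S₂ ≤ t → 2*Real.sqrt (r t) ≤ 2*Real.sqrt (r S₂) + (t - S₂) := by
    intro t ht
    have h := deriv_le_slope (f := fun x => 2*Real.sqrt (r x))
      (d := fun s => 2 * (Real.sqrt (C₀ + k * Real.log (r s)) / (2 * Real.sqrt (r s))))
      (M := 1) ht (fun s hs => hφ s hs.1) (fun s hs => hφbound s hs.1)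
    linarith only [h]
  set S₃ := max S₂ (2*Real.sqrt (r S₂)) with hS₃def
  have hS₃S₂ : S₂ ≤ S₃ := le_max_left _ _
  have hS₃1 : (1:ℝ) ≤ S₃ := hS₂1.trans hS₃S₂
  have hS₃T : T ≤ S₃ := hS₂T.trans hS₃S₂
  have hlogD : ∀ s, S₃ ≤ s → Real.log (r s) ≤ 2 * Real.log s := by
    intro s hs
    have hs1 : (1:ℝ) ≤ s := hS₃1.trans hs
    have hA : 2*Real.sqrt (r S₂) ≤ s := (le_max_right _ _).trans hs
    have h1 := hsqgrow s (hS₃S₂.trans hs)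
    have hsq : Real.sqrt (r s) ≤ s := by linarith only [h1, hA, hS₂1]
    have hrs2 : r s ≤ s^2 := by
      have h2 := Real.sq_sqrt (hpos s (hS₂T.trans (hS₃S₂.trans hs))).le
      have h3 : Real.sqrt (r s) * Real.sqrt (r s) ≤ s * s :=
        mul_le_mul hsq hsq (Real.sqrt_nonneg _) (by linarith only [hs1])
      nlinarith [h2, h3]
    have h4 := Real.log_le_log (hpos s (hS₃T.trans hs)) hrs2
    rw [show s^2 = s^(2:ℕ) by norm_num, Real.log_pow] at h4
    exact_mod_cast h4
  -- Step F' : log (r t) ≤ log t + √((2k+1) log t) eventually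
  set S₄ := max S₃ (max (r S₃) (Real.exp C₀)) with hS₄def
  have hS₄S₃ : S₃ ≤ S₄ := le_max_left _ _
  have hS₄1 : (1:ℝ) ≤ S₄ := hS₃1.trans hS₄S₃
  have hS₄T : T ≤ S₄ := hS₃T.trans hS₄S₃
  have hF : ∀ t, S₄ ≤ t →
      Real.log (r t) ≤ Real.log t + Real.sqrt ((2*k+1) * Real.log t) := by
    intro t ht
    have hS₃t : S₃ ≤ t := hS₄S₃.trans ht
    have ht1 : (1:ℝ) ≤ t := hS₄1.trans ht
    have hMt : ∀ s ∈ Set.Icc S₃ t, Real.sqrt (C₀ + k * Real.log (r s))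
        ≤ Real.sqrt (C₀ + 2*k*Real.log t) := by
      intro s hs
      have hs1 : (1:ℝ) ≤ s := hS₃1.trans hs.1
      have hls : Real.log s ≤ Real.log t := Real.log_le_log (by linarith only [hs1]) hs.2
      have h := hlogD s hs.1
      apply Real.sqrt_le_sqrt
      linarith only [mul_le_mul_of_nonneg_left h hk.le,
        mul_le_mul_of_nonneg_left hls (by positivity : (0:ℝ) ≤ 2*k)]
    have hslope := deriv_le_slope hS₃t (fun s hs => hode' s (hS₃T.trans hs.1)) hMt
    have hC₀lt : C₀ ≤ Real.log t := by
      have hexp : Real.exp C₀ ≤ t := ((le_max_right _ _).trans (le_max_right _ _)).trans ht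
      calc C₀ = Real.log (Real.exp C₀) := (Real.log_exp C₀).symm
        _ ≤ Real.log t := Real.log_le_log (Real.exp_pos _) hexp
    have hM2 : Real.sqrt (C₀ + 2*k*Real.log t) ≤ Real.sqrt ((2*k+1) * Real.log t) :=
      Real.sqrt_le_sqrt (by linarith only [hC₀lt])
    have hrS₃t : r S₃ ≤ t := ((le_max_left _ _).trans (le_max_right _ _)).trans ht
    have hEnn : 0 ≤ Real.sqrt ((2*k+1) * Real.log t) := Real.sqrt_nonneg _
    have hS₃0 : (0:ℝ) ≤ S₃ := by linarith only [hS₃1]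
    have hrt : r t ≤ t * (1 + Real.sqrt ((2*k+1) * Real.log t)) := by
      have h1 : Real.sqrt (C₀ + 2*k*Real.log t) * (t - S₃)
          ≤ Real.sqrt ((2*k+1) * Real.log t) * (t - S₃) :=
        mul_le_mul_of_nonneg_right hM2 (by linarith only [hS₃t])
      have h2 : Real.sqrt ((2*k+1) * Real.log t) * (t - S₃)
          ≤ Real.sqrt ((2*k+1) * Real.log t) * t :=
        mul_le_mul_of_nonneg_left (by linarith only [hS₃0]) hEnn
      linarith only [hslope, h1, h2, hrS₃t]
    have h3 : Real.log (r t) ≤ Real.log (t * (1 + Real.sqrt ((2*k+1) * Real.log t))) :=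
      Real.log_le_log (hpos t (hS₄T.trans ht)) hrt
    rw [Real.log_mul (by linarith only [ht1]) (by linarith only [hEnn])] at h3
    have h4 : Real.log (1 + Real.sqrt ((2*k+1) * Real.log t))
        ≤ Real.sqrt ((2*k+1) * Real.log t) := by
      have h5 := Real.log_le_sub_one_of_pos
        (show 0 < 1 + Real.sqrt ((2*k+1) * Real.log t) by linarith only [hEnn])
      linarith only [h5]
    linarith only [h3, h4]
  -- Final step
  rw [Metric.tendsto_nhds]
  intro ε hε
  set δ := min ε 1 / 4 with hδdef
  have hδ0 : 0 < δ := by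
    have h := lt_min hε one_pos
    rw [hδdef]; linarith only [h]
  have hδle : δ ≤ ε/4 := by
    have h := min_le_left ε 1
    rw [hδdef]; linarith only [h]
  have hδ1 : δ ≤ 1/4 := by
    have h := min_le_right ε 1
    rw [hδdef]; linarith only [h]
  filter_upwards [eventually_ge_atTop S₄,
    eventually_ge_atTop (r S₄ / δ),
    eventually_ge_atTop ((2 * max (2*S₁) 1)^2),
    hlog.eventually_ge_atTop (4*(2*k+1)/δ^2),
    hlog.eventually_ge_atTop (2*|C₀|/(δ*k)),
    hlog.eventually_ge_atTop (1/k),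
    hlog.eventually_ge_atTop (1/δ),
    hlog.eventually_ge_atTop (4/δ^2),
    eventually_ge_atTop 1] with t htS₄ htB htsq htU htC₀ htk htδ htδ2 ht1
  have hlt : 0 < Real.log t := lt_of_lt_of_le (one_div_pos.2 hδ0) htδ
  have hlt1 : 1 ≤ Real.log t := by
    have h4δ : (4:ℝ) ≤ 1/δ := by
      rw [le_div_iff₀ hδ0]; linarith only [hδ1]
    linarith only [h4δ, htδ]
  have ht0 : (0:ℝ) < t := by linarith only [ht1]
  have hkl1 : 1 ≤ k * Real.log t := by
    have h := (div_le_iff₀ hk).1 htk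
    linarith only [h]
  have hkl0 : 0 < k * Real.log t := by positivity
  set q := Real.sqrt (k * Real.log t) with hqdef
  have hq0 : (0:ℝ) ≤ q := Real.sqrt_nonneg _
  have hsq1 : 1 ≤ q := Real.one_le_sqrt.2 hkl1
  have hQ : 0 < t * q := mul_pos ht0 (by linarith only [hsq1])
  have hden : 2 * t * Real.sqrt (lam*α₀*Real.log t) = t * q := by
    have h4 : k * Real.log t = 4 * (lam*α₀*Real.log t) := by rw [hkdef]; ring
    rw [hqdef, h4, Real.sqrt_mul (by norm_num : (0:ℝ) ≤ 4), sqrt_four]; ring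
  -- upper bound
  have hup : r t ≤ (1 + 2*δ) * (t * q) := by
    have hC₀small : C₀ ≤ (δ/2) * (k * Real.log t) := by
      have h1 := (div_le_iff₀ (by positivity : 0 < δ*k)).1 htC₀
      have h2 := le_abs_self C₀
      linarith only [h1, h2]
    have hEt_small : k * Real.sqrt ((2*k+1) * Real.log t) ≤ (δ/2) * (k * Real.log t) := by
      have h1 := (div_le_iff₀ (pow_pos hδ0 2)).1 htU
      have h2 : Real.sqrt ((2*k+1) * Real.log t) ≤ δ/2 * Real.log t := by
        rw [show δ/2*Real.log t = Real.sqrt ((δ/2*Real.log t)^2) from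
          (Real.sqrt_sq (mul_nonneg (by linarith only [hδ0]) hlt.le)).symm]
        apply Real.sqrt_le_sqrt
        nlinarith only [h1, hlt.le]
      have h3 := mul_le_mul_of_nonneg_left h2 hk.le
      linarith only [h3]
    have hMt : ∀ s ∈ Set.Icc S₄ t, Real.sqrt (C₀ + k * Real.log (r s))
        ≤ Real.sqrt ((1+δ) * (k * Real.log t)) := by
      intro s hs
      have hs1 : (1:ℝ) ≤ s := hS₄1.trans hs.1
      have hls : Real.log s ≤ Real.log t := Real.log_le_log (by linarith only [hs1]) hs.2
      have hFs := hF s hs.1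
      have hEs : Real.sqrt ((2*k+1) * Real.log s) ≤ Real.sqrt ((2*k+1) * Real.log t) :=
        Real.sqrt_le_sqrt (mul_le_mul_of_nonneg_left hls (by positivity))
      apply Real.sqrt_le_sqrt
      have h5 : Real.log (r s) ≤ Real.log t + Real.sqrt ((2*k+1) * Real.log t) := by
        linarith only [hFs, hls, hEs]
      have h6 := mul_le_mul_of_nonneg_left h5 hk.le
      linarith only [h6, hC₀small, hEt_small]
    have hslope := deriv_le_slope htS₄ (fun s hs => hode' s (hS₄T.trans hs.1)) hMt
    have hMnn : 0 ≤ Real.sqrt ((1+δ) * (k * Real.log t)) := Real.sqrt_nonneg _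
    have hsqsplit : Real.sqrt ((1+δ) * (k * Real.log t)) ≤ (1+δ) * q := by
      rw [Real.sqrt_mul (by linarith only [hδ0] : (0:ℝ) ≤ 1+δ)]
      exact mul_le_mul_of_nonneg_right (sqrt_le_self' (by linarith only [hδ0])) hq0
    have hS₄0 : (0:ℝ) ≤ S₄ := by linarith only [hS₄1]
    have h1 : Real.sqrt ((1+δ) * (k * Real.log t)) * (t - S₄)
        ≤ Real.sqrt ((1+δ) * (k * Real.log t)) * t :=
      mul_le_mul_of_nonneg_left (by linarith only [hS₄0]) hMnn
    have h2 : Real.sqrt ((1+δ) * (k * Real.log t)) * t ≤ ((1+δ) * q) * t :=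
      mul_le_mul_of_nonneg_right hsqsplit ht0.le
    have hB : r S₄ ≤ δ * t := by
      have h := (div_le_iff₀ hδ0).1 htB
      linarith only [h]
    have hδt : δ*t ≤ δ*(t*q) := by
      have h := mul_le_mul_of_nonneg_left hsq1 (by positivity : (0:ℝ) ≤ δ*t)
      linarith only [h]
    linarith only [hslope, h1, h2, hB, hδt]
  -- lower bound
  have hlow : (1 - 3*δ) * (t * q) ≤ r t := by
    set a := t / Real.log t with hadef
    have hat : a ≤ t := div_le_self ht0.le hlt1
    have hsqrt_t : Real.log t ≤ 2*Real.sqrt t := log_le_two_sqrt ht0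
    have htt : Real.sqrt t * Real.sqrt t = t := Real.mul_self_sqrt ht0.le
    have ha_ge : Real.sqrt t / 2 ≤ a := by
      rw [hadef, le_div_iff₀ hlt]
      have h := mul_le_mul_of_nonneg_left hsqrt_t (Real.sqrt_nonneg t)
      linarith only [h, htt]
    have hMx : 2*max (2*S₁) 1 ≤ Real.sqrt t := by
      have hm0 : (0:ℝ) ≤ 2*max (2*S₁) 1 := by positivity
      exact (Real.le_sqrt hm0 ht0.le).2 htsq
    have ha2S₁ : 2*S₁ ≤ a := by
      have h := le_max_left (2*S₁) 1
      linarith only [h, hMx, ha_ge]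
    have ha1 : (1:ℝ) ≤ a := by
      have h := le_max_right (2*S₁) 1
      linarith only [h, hMx, ha_ge]
    have haT : T ≤ a := by linarith only [ha2S₁, hS₁1, hS₁T]
    have hlna : (1-δ)*Real.log t ≤ Real.log a := by
      rw [hadef, Real.log_div (ne_of_gt ht0) (ne_of_gt hlt)]
      have h1 : Real.log (Real.log t) ≤ 2*Real.sqrt (Real.log t) := log_le_two_sqrt hlt
      have h2 := (div_le_iff₀ (pow_pos hδ0 2)).1 htδ2
      have h3 : Real.sqrt (Real.log t) ≤ δ/2 * Real.log t := by
        rw [show δ/2*Real.log t = Real.sqrt ((δ/2*Real.log t)^2) from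
          (Real.sqrt_sq (mul_nonneg (by linarith only [hδ0]) hlt.le)).symm]
        apply Real.sqrt_le_sqrt
        nlinarith only [h2, hlt.le]
      linarith only [h1, h3]
    have hmlow : ∀ s ∈ Set.Icc a t,
        Real.sqrt ((1-2*δ)*(k*Real.log t)) ≤ Real.sqrt (C₀ + k * Real.log (r s)) := by
      intro s hs
      have hs2S₁ : 2*S₁ ≤ s := ha2S₁.trans hs.1
      have hlogrs : Real.log s ≤ Real.log (r s) := hlogC s hs2S₁
      have hlogas : Real.log a ≤ Real.log s := Real.log_le_log (by linarith only [ha1]) hs.1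
      have hC₀' : -(δ*(k*Real.log t)) ≤ C₀ := by
        have h1 := (div_le_iff₀ (by positivity : 0 < δ*k)).1 htC₀
        have h2 := neg_abs_le C₀
        have h3 : 0 ≤ δ*(k*Real.log t) := mul_nonneg hδ0.le hkl0.le
        linarith only [h1, h2, h3]
      apply Real.sqrt_le_sqrt
      have h5 : (1-δ)*Real.log t ≤ Real.log (r s) := by linarith only [hlna, hlogas, hlogrs]
      have h6 := mul_le_mul_of_nonneg_left h5 hk.le
      linarith only [h6, hC₀']
    have hslope2 := slope_le_deriv hat (fun s hs => hode' s (haT.trans hs.1)) hmlow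
    have hra : 0 < r a := hpos a haT
    have hta : (1-δ)*t ≤ t - a := by
      have h1 : (1:ℝ) ≤ Real.log t * δ := (div_le_iff₀ hδ0).1 htδ
      have h2 : a ≤ δ*t := by
        rw [hadef, div_le_iff₀ hlt]
        have h3 := mul_le_mul_of_nonneg_left h1 ht0.le
        linarith only [h3]
      linarith only [h2]
    have hsnn : 0 ≤ Real.sqrt ((1-2*δ)*(k*Real.log t)) := Real.sqrt_nonneg _
    have hsqsplit2 : (1-2*δ)*q ≤ Real.sqrt ((1-2*δ)*(k*Real.log t)) := by
      rw [Real.sqrt_mul (by linarith only [hδ1] : (0:ℝ) ≤ 1-2*δ)]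
      exact mul_le_mul_of_nonneg_right
        (self_le_sqrt' (by linarith only [hδ1]) (by linarith only [hδ0])) hq0
    have h5 : ((1-2*δ)*q)*((1-δ)*t) ≤ Real.sqrt ((1-2*δ)*(k*Real.log t))*(t-a) :=
      mul_le_mul hsqsplit2 hta
        (mul_nonneg (by linarith only [hδ1]) ht0.le) hsnn
    have hδδ : 0 ≤ δ*δ*t*q := by positivity
    linarith only [hslope2, h5, hra, hδδ]
  rw [Real.dist_eq, hden, abs_sub_lt_iff]
  constructor
  · have h1 : r t / (t*q) ≤ 1 + 2*δ := (div_le_iff₀ hQ).2 (by linarith only [hup])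
    linarith only [h1, hδle, hε]
  · have h1 : 1 - 3*δ ≤ r t / (t*q) := (le_div_iff₀ hQ).2 (by linarith only [hlow])
    linarith only [h1, hδle, hε, hδ0]
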